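/- Let A = (a_{st}) ∈ M(n,ℍ) and fix j ∈ {1,…,n}. Then cdet_j A = Σ_{i=1}^n L_{ij} · a_{ij}, where the left ij-th cofactor is L_{ij} = −cdet_i (A^{jj}_{i.}(a_{j.})) for i ≠ j and L_{jj} = cdet_k (A^{jj}) with k = min({1,…,n} \ {j}); here A^{jj} denotes the matrix obtained from A by deleting its j-th row and j-th column, a_{j.} denotes the j-th row of A, and A^{jj}_{i.}(a_{j.}) is obtained from A by replacing the i-th row with the j-th row and then deleting both the j-th row and the j-th column. -/

import Mathlib

open scoped Quaternion
open Matrix Filter Topology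

noncomputable section

/-- The product of entries along the cycle of `σ` containing `c`, written in left-ordered
cycle notation starting at `c`: `a_{c, σc} a_{σc, σ²c} ⋯ a_{σ^{l}c, c}`. -/
def cycProdL {n : ℕ} (A : Matrix (Fin n) (Fin n) ℍ[ℝ]) (σ : Equiv.Perm (Fin n))
    (c : Fin n) : ℍ[ℝ] :=
  ((List.range (Function.minimalPeriod (⇑σ) c)).map
    fun t => A ((σ ^ t) c) ((σ ^ (t + 1)) c)).prod

/-- The product of entries along the cycle of `σ` containing `c`, written in right-ordered
cycle notation ending at `c`: `a_{c, σ^{l}c} a_{σ^{l}c, σ^{l-1}c} ⋯ a_{σc, c}`. -/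
def cycProdR {n : ℕ} (A : Matrix (Fin n) (Fin n) ℍ[ℝ]) (σ : Equiv.Perm (Fin n))
    (c : Fin n) : ℍ[ℝ] :=
  (((List.range (Function.minimalPeriod (⇑σ) c)).map
    fun t => A ((σ ^ (t + 1)) c) ((σ ^ t) c)).reverse).prod

/-- The number `r` of disjoint cycles (fixed points included) of a permutation:
the number of points that are minimal in their own cycle. -/
def cycCount {n : ℕ} (σ : Equiv.Perm (Fin n)) : ℕ :=
  (Finset.univ.filter fun c : Fin n => ∀ d, σ.SameCycle c d → c ≤ d).card

/-- The `i`-th row determinant of a square quaternion matrix: the cycle containing `i`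
is written first, starting with `i`; all other cycles start with their smallest elements
and are ordered from left to right by increasing first elements. -/
def rdet {n : ℕ} (A : Matrix (Fin n) (Fin n) ℍ[ℝ]) (i : Fin n) : ℍ[ℝ] :=
  ∑ σ : Equiv.Perm (Fin n),
    (-1 : ℍ[ℝ]) ^ (n - cycCount σ) *
      (cycProdL A σ i *
        (((List.finRange n).filter fun c =>
            decide (¬σ.SameCycle i c ∧ ∀ d, σ.SameCycle c d → c ≤ d)).map
          (cycProdL A σ)).prod)

/-- The `j`-th column determinant of a square quaternion matrix: the cycle containing `j`
is written last, ending with `j`; all other cycles end with their smallest elements,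
the last elements increasing from right to left. -/
def cdet {n : ℕ} (A : Matrix (Fin n) (Fin n) ℍ[ℝ]) (j : Fin n) : ℍ[ℝ] :=
  ∑ σ : Equiv.Perm (Fin n),
    (-1 : ℍ[ℝ]) ^ (n - cycCount σ) *
      ((((((List.finRange n).filter fun c =>
            decide (¬σ.SameCycle j c ∧ ∀ d, σ.SameCycle c d → c ≤ d)).map
          (cycProdR A σ)).reverse).prod) * cycProdR A σ j)

/-- The determinant of a Hermitian quaternion matrix (the common value of all row and
column determinants): every cycle is written starting with its smallest element and the
cycles are ordered from left to right by increasing first elements. -/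
def hdet {n : ℕ} (A : Matrix (Fin n) (Fin n) ℍ[ℝ]) : ℍ[ℝ] :=
  ∑ σ : Equiv.Perm (Fin n),
    (-1 : ℍ[ℝ]) ^ (n - cycCount σ) *
      (((List.finRange n).filter fun c =>
          decide (∀ d, σ.SameCycle c d → c ≤ d)).map
        (cycProdL A σ)).prod

/-- The double determinant of a square quaternion matrix. -/
def ddet {n : ℕ} (A : Matrix (Fin n) (Fin n) ℍ[ℝ]) : ℍ[ℝ] := hdet (Aᴴ * A)

/-- The rank of a quaternion matrix: the maximal number of right linearly independent
columns, i.e. the dimension of the right ℍ-span of the columns. -/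
def qrank {m n : ℕ} (A : Matrix (Fin m) (Fin n) ℍ[ℝ]) : ℕ :=
  Module.finrank ℍ[ℝ]ᵐᵒᵖ
    (Submodule.span ℍ[ℝ]ᵐᵒᵖ (Set.range fun j : Fin n => fun i => A i j))

/-- The Frobenius norm of a quaternion matrix. -/
def fnorm {m n : ℕ} (A : Matrix (Fin m) (Fin n) ℍ[ℝ]) : ℝ :=
  Real.sqrt (∑ i, ∑ j, ‖A i j‖ ^ 2)

/-- `X` is the Moore–Penrose inverse of `A`: the four Penrose equations. -/
def IsMP {m n : ℕ} (A : Matrix (Fin m) (Fin n) ℍ[ℝ])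
    (X : Matrix (Fin n) (Fin m) ℍ[ℝ]) : Prop :=
  A * X * A = A ∧ X * A * X = X ∧ (A * X)ᴴ = A * X ∧ (X * A)ᴴ = X * A

/-- The left `ij`-th cofactor of `A`: for `i ≠ j` it is `−cdet_i` of the matrix obtained
from `A` by replacing the `i`-th row with the `j`-th row and deleting the `j`-th row and
column (the index of that row in the submatrix being the unique `t` with
`j.succAbove t = i`); for `i = j` it is `cdet_k` of `A` with the `j`-th row and column
deleted, where `k = min({1,…,n} \ {j})` corresponds to the index `0` of the submatrix. -/
def Lcof {n : ℕ} (A : Matrix (Fin (n + 2)) (Fin (n + 2)) ℍ[ℝ]) (i j : Fin (n + 2)) :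
    ℍ[ℝ] :=
  if i = j then cdet (A.submatrix j.succAbove j.succAbove) 0
  else
    -∑ t ∈ Finset.univ.filter fun t : Fin (n + 1) => j.succAbove t = i,
      cdet ((A.updateRow i fun s => A j s).submatrix j.succAbove j.succAbove) t

namespace CofactorAux
open Equiv Function List

lemma perm_periodic {m : ℕ} (σ : Equiv.Perm (Fin m)) (x : Fin m) :
    x ∈ Function.periodicPts ⇑σ := by
  refine ⟨orderOf σ, orderOf_pos σ, ?_⟩
  show (⇑σ)^[orderOf σ] x = x
  rw [Equiv.Perm.iterate_eq_pow, pow_orderOf_eq_one]; rfl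

lemma minPer_pos {m : ℕ} (σ : Equiv.Perm (Fin m)) (x : Fin m) :
    0 < Function.minimalPeriod ⇑σ x :=
  Function.minimalPeriod_pos_of_mem_periodicPts (perm_periodic σ x)

lemma perm_pow_minPer {m : ℕ} (σ : Equiv.Perm (Fin m)) (x : Fin m) :
    (σ ^ Function.minimalPeriod ⇑σ x) x = x := by
  have := Function.iterate_minimalPeriod (f := ⇑σ) (x := x)
  rwa [Equiv.Perm.iterate_eq_pow] at this

lemma sameCycle_iff_pow {m : ℕ} (σ : Equiv.Perm (Fin m)) (x y : Fin m) :
    σ.SameCycle x y ↔ ∃ k : ℕ, (σ ^ k) x = y := by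
  constructor
  · intro h
    obtain ⟨i, _, h⟩ := h.exists_pow_eq'
    exact ⟨i, h⟩
  · rintro ⟨k, rfl⟩
    exact Equiv.Perm.sameCycle_pow_right.mpr (Equiv.Perm.SameCycle.refl σ x)

/-- two strictly sorted lists with same membership are equal -/
lemma eq_of_sorted_mem {α : Type*} [LinearOrder α] {l₁ l₂ : List α}
    (h₁ : l₁.Pairwise (· < ·)) (h₂ : l₂.Pairwise (· < ·))
    (h : ∀ x, x ∈ l₁ ↔ x ∈ l₂) : l₁ = l₂ := by
  refine List.Perm.eq_of_pairwise (fun _ _ _ _ hab hba => absurd hab (not_lt_of_gt hba)) h₁ h₂ ?_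
  refine List.perm_of_nodup_nodup_toFinset_eq ?_ ?_ ?_
  · exact h₁.imp ne_of_lt
  · exact h₂.imp ne_of_lt
  · ext x; simp [h x]

lemma filter_finRange_map {n : ℕ} (j : Fin (n + 2)) (P : Fin (n + 2) → Prop)
    [DecidablePred P] (hj : ¬ P j) :
    (List.finRange (n + 2)).filter (fun c => decide (P c)) =
      ((List.finRange (n + 1)).filter fun c => decide (P (j.succAbove c))).map j.succAbove := by
  refine eq_of_sorted_mem ((List.pairwise_lt_finRange _).filter _) ?_ ?_
  · rw [List.pairwise_map]
    exact ((List.pairwise_lt_finRange _).filter _).imp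
      (fun h => Fin.strictMono_succAbove j h)
  · intro x
    simp only [List.mem_filter, List.mem_finRange, true_and, List.mem_map,
      decide_eq_true_eq]
    constructor
    · intro hx
      obtain ⟨s, rfl⟩ := Fin.exists_succAbove_eq (fun he : x = j => hj (he ▸ hx))
      exact ⟨s, by simpa using hx, rfl⟩
    · rintro ⟨s, hs, rfl⟩
      simpa using hs


def cycFinset {m : ℕ} (σ : Equiv.Perm (Fin m)) (c : Fin m) : Finset (Fin m) :=
  Finset.univ.filter fun d => σ.SameCycle c d

lemma mem_cycFinset {m : ℕ} (σ : Equiv.Perm (Fin m)) (c d : Fin m) :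
    d ∈ cycFinset σ c ↔ σ.SameCycle c d := by simp [cycFinset]

lemma cycFinset_congr {m : ℕ} (σ : Equiv.Perm (Fin m)) {c d : Fin m}
    (h : σ.SameCycle c d) : cycFinset σ c = cycFinset σ d := by
  ext x; simp only [mem_cycFinset]
  exact ⟨fun hx => h.symm.trans hx, fun hx => h.trans hx⟩

lemma cycCount_eq_card_image {m : ℕ} (σ : Equiv.Perm (Fin m)) :
    cycCount σ = (Finset.univ.image fun c => cycFinset σ c).card := by
  unfold cycCount
  refine Finset.card_bij (fun c _ => cycFinset σ c) ?_ ?_ ?_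
  · intro c _; exact Finset.mem_image_of_mem _ (Finset.mem_univ c)
  · intro c hc c' hc' h
    simp only [Finset.mem_filter] at hc hc'
    have h1 : σ.SameCycle c c' := by
      have h' : cycFinset σ c = cycFinset σ c' := h
      have : c' ∈ cycFinset σ c := h' ▸ (mem_cycFinset σ c' c').mpr (Equiv.Perm.SameCycle.refl σ c')
      exact (mem_cycFinset σ c c').mp this
    exact le_antisymm (hc.2 c' h1) (hc'.2 c h1.symm)
  · intro S hS
    obtain ⟨c, -, rfl⟩ := Finset.mem_image.mp hS
    have hne : (cycFinset σ c).Nonempty :=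
      ⟨c, (mem_cycFinset σ c c).mpr (Equiv.Perm.SameCycle.refl σ c)⟩
    set m₀ := (cycFinset σ c).min' hne with hm₀
    have hmem : m₀ ∈ cycFinset σ c := Finset.min'_mem _ hne
    have hcm : σ.SameCycle c m₀ := (mem_cycFinset σ c m₀).mp hmem
    refine ⟨m₀, Finset.mem_filter.mpr ⟨Finset.mem_univ _, ?_⟩, (cycFinset_congr σ hcm).symm⟩
    intro d hd
    exact Finset.min'_le _ d ((mem_cycFinset σ c d).mpr (hcm.trans hd))

lemma cycCount_le {m : ℕ} (σ : Equiv.Perm (Fin m)) : cycCount σ ≤ m := by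
  unfold cycCount
  exact (Finset.card_filter_le Finset.univ _).trans (by simp)


variable {n : ℕ}

def ins (j : Fin (n + 2)) (o : Option (Fin (n + 1))) (τ : Equiv.Perm (Fin (n + 1))) :
    Equiv.Perm (Fin (n + 2)) :=
  (finSuccEquiv' j).permCongr.symm (Equiv.swap none o * τ.optionCongr)

lemma ins_eq_decompose (j : Fin (n + 2)) (p : Option (Fin (n + 1)) × Equiv.Perm (Fin (n + 1))) :
    ins j p.1 p.2 = ((finSuccEquiv' j).permCongr.trans Equiv.Perm.decomposeOption).symm p := by
  simp [ins, Equiv.Perm.decomposeOption_symm_apply]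

lemma ins_apply (j : Fin (n + 2)) (o : Option (Fin (n + 1))) (τ : Equiv.Perm (Fin (n + 1)))
    (x : Fin (n + 2)) :
    ins j o τ x = (finSuccEquiv' j).symm
      ((Equiv.swap none o) (((finSuccEquiv' j) x).map τ)) := by
  simp [ins, Equiv.permCongr_symm, Equiv.permCongr_apply, Equiv.Perm.mul_apply]

lemma ins_none_apply_j (j : Fin (n + 2)) (τ : Equiv.Perm (Fin (n + 1))) :
    ins j none τ j = j := by
  simp [ins_apply]

lemma ins_none_apply_sA (j : Fin (n + 2)) (τ : Equiv.Perm (Fin (n + 1))) (s : Fin (n + 1)) :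
    ins j none τ (j.succAbove s) = j.succAbove (τ s) := by
  simp [ins_apply]

lemma ins_some_apply_j (j : Fin (n + 2)) (t : Fin (n + 1)) (τ : Equiv.Perm (Fin (n + 1))) :
    ins j (some t) τ j = j.succAbove t := by
  simp [ins_apply, Equiv.swap_apply_left]

lemma ins_some_apply_sA (j : Fin (n + 2)) (t : Fin (n + 1)) (τ : Equiv.Perm (Fin (n + 1)))
    (s : Fin (n + 1)) :
    ins j (some t) τ (j.succAbove s) = if τ s = t then j else j.succAbove (τ s) := by
  rw [ins_apply]
  simp only [finSuccEquiv'_succAbove, Option.map_some]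
  by_cases h : τ s = t
  · simp [h, Equiv.swap_apply_right]
  · rw [Equiv.swap_apply_of_ne_of_ne (by simp) (by simpa using h)]
    simp [h]

section transfer
variable {j : Fin (n + 2)} {σ : Equiv.Perm (Fin (n + 2))} {τ : Equiv.Perm (Fin (n + 1))}
  {s : Fin (n + 1)}

lemma conj_pow (h : ∀ x, τ.SameCycle s x → σ (j.succAbove x) = j.succAbove (τ x)) :
    ∀ k : ℕ, (σ ^ k) (j.succAbove s) = j.succAbove ((τ ^ k) s) := by
  intro k
  induction k with
  | zero => simp
  | succ k ih =>
    rw [pow_succ', Equiv.Perm.mul_apply, ih,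
      h _ (Equiv.Perm.sameCycle_pow_right.mpr (Equiv.Perm.SameCycle.refl τ s)),
      ← Equiv.Perm.mul_apply, ← pow_succ']

lemma conj_minPer (h : ∀ x, τ.SameCycle s x → σ (j.succAbove x) = j.succAbove (τ x)) :
    Function.minimalPeriod ⇑σ (j.succAbove s) = Function.minimalPeriod ⇑τ s := by
  refine Nat.dvd_antisymm ?_ ?_
  · refine Function.IsPeriodicPt.minimalPeriod_dvd ?_
    show (⇑σ)^[_] _ = _
    rw [Equiv.Perm.iterate_eq_pow, conj_pow h]
    rw [show ((τ ^ Function.minimalPeriod ⇑τ s) s) = s from ?_]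
    · have := Function.iterate_minimalPeriod (f := ⇑τ) (x := s)
      rwa [Equiv.Perm.iterate_eq_pow] at this
  · refine Function.IsPeriodicPt.minimalPeriod_dvd ?_
    show (⇑τ)^[_] _ = _
    rw [Equiv.Perm.iterate_eq_pow]
    have := Function.iterate_minimalPeriod (f := ⇑σ) (x := j.succAbove s)
    rw [Equiv.Perm.iterate_eq_pow, conj_pow h] at this
    exact Fin.succAbove_right_injective this

lemma conj_sameCycle (h : ∀ x, τ.SameCycle s x → σ (j.succAbove x) = j.succAbove (τ x))
    (d : Fin (n + 2)) :
    σ.SameCycle (j.succAbove s) d ↔ ∃ x, τ.SameCycle s x ∧ d = j.succAbove x := by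
  constructor
  · intro hd
    obtain ⟨k, rfl⟩ := (sameCycle_iff_pow σ _ d).mp hd
    exact ⟨(τ ^ k) s, Equiv.Perm.sameCycle_pow_right.mpr (Equiv.Perm.SameCycle.refl τ s),
      (conj_pow h k)⟩
  · rintro ⟨x, hx, rfl⟩
    obtain ⟨k, rfl⟩ := (sameCycle_iff_pow τ s x).mp hx
    exact (sameCycle_iff_pow σ _ _).mpr ⟨k, conj_pow h k⟩

lemma conj_minimal (h : ∀ x, τ.SameCycle s x → σ (j.succAbove x) = j.succAbove (τ x)) :
    (∀ d, σ.SameCycle (j.succAbove s) d → j.succAbove s ≤ d) ↔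
      (∀ x, τ.SameCycle s x → s ≤ x) := by
  constructor
  · intro hm x hx
    have := hm (j.succAbove x) ((conj_sameCycle h _).mpr ⟨x, hx, rfl⟩)
    exact (Fin.strictMono_succAbove j).le_iff_le.mp this
  · intro hm d hd
    obtain ⟨x, hx, rfl⟩ := (conj_sameCycle h _).mp hd
    exact (Fin.strictMono_succAbove j).le_iff_le.mpr (hm x hx)

lemma conj_cycProdR {A : Matrix (Fin (n + 2)) (Fin (n + 2)) ℍ[ℝ]}
    {B : Matrix (Fin (n + 1)) (Fin (n + 1)) ℍ[ℝ]}
    (h : ∀ x, τ.SameCycle s x → σ (j.succAbove x) = j.succAbove (τ x))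
    (hAB : ∀ x y, τ.SameCycle s x → A (j.succAbove x) (j.succAbove y) = B x y) :
    cycProdR A σ (j.succAbove s) = cycProdR B τ s := by
  unfold cycProdR
  rw [conj_minPer h]
  congr 2
  refine List.map_congr_left fun k _ => ?_
  rw [conj_pow h, conj_pow h]
  exact hAB _ _ (Equiv.Perm.sameCycle_pow_right.mpr (Equiv.Perm.SameCycle.refl τ s))


lemma conj_cycFinset (h : ∀ x, τ.SameCycle s x → σ (j.succAbove x) = j.succAbove (τ x)) :
    cycFinset σ (j.succAbove s) = (cycFinset τ s).image j.succAbove := by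
  ext d
  simp only [mem_cycFinset, conj_sameCycle h, Finset.mem_image]
  constructor
  · rintro ⟨x, hx, rfl⟩
    exact ⟨x, hx, rfl⟩
  · rintro ⟨x, hx, rfl⟩
    exact ⟨x, hx, rfl⟩

end transfer

section cases
variable (j : Fin (n + 2)) (τ : Equiv.Perm (Fin (n + 1)))

lemma ins_none_h (s : Fin (n + 1)) :
    ∀ x, τ.SameCycle s x → ins j none τ (j.succAbove x) = j.succAbove (τ x) :=
  fun x _ => ins_none_apply_sA j τ x

lemma ins_none_pow_j (k : ℕ) : ((ins j none τ) ^ k) j = j := by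
  induction k with
  | zero => simp
  | succ k ih => rw [pow_succ', Equiv.Perm.mul_apply, ih, ins_none_apply_j]

lemma ins_none_sameCycle_j (d : Fin (n + 2)) :
    (ins j none τ).SameCycle j d ↔ d = j := by
  constructor
  · intro h
    obtain ⟨k, rfl⟩ := (sameCycle_iff_pow _ _ _).mp h
    exact ins_none_pow_j j τ k
  · rintro rfl; exact Equiv.Perm.SameCycle.refl _ _

lemma ins_none_minPer_j : Function.minimalPeriod ⇑(ins j none τ) j = 1 :=
  Function.minimalPeriod_eq_one_iff_isFixedPt.mpr (ins_none_apply_j j τ)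

lemma ins_none_cycProdR (A : Matrix (Fin (n + 2)) (Fin (n + 2)) ℍ[ℝ]) :
    cycProdR A (ins j none τ) j = A j j := by
  unfold cycProdR
  rw [ins_none_minPer_j]
  simp [List.range_succ, ins_none_pow_j]

lemma ins_none_cycFinset_j : cycFinset (ins j none τ) j = {j} := by
  ext d
  simp [mem_cycFinset, ins_none_sameCycle_j]

variable (t : Fin (n + 1))

lemma ins_some_h {s : Fin (n + 1)} (hs : ¬ τ.SameCycle t s) :
    ∀ x, τ.SameCycle s x → ins j (some t) τ (j.succAbove x) = j.succAbove (τ x) := by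
  intro x hx
  rw [ins_some_apply_sA, if_neg]
  intro he
  have h1 : τ.SameCycle (τ x) s :=
    (Equiv.Perm.SameCycle.symm ⟨1, by simp⟩ : τ.SameCycle (τ x) x).trans hx.symm
  rw [he] at h1
  exact hs h1

lemma ins_some_pow_j {k : ℕ} (hk : k < Function.minimalPeriod ⇑τ t) :
    ((ins j (some t) τ) ^ (k + 1)) j = j.succAbove ((τ ^ k) t) := by
  induction k with
  | zero => simp [ins_some_apply_j]
  | succ k ih =>
    have hk' : k < Function.minimalPeriod ⇑τ t := Nat.lt_of_succ_lt hk
    rw [pow_succ', Equiv.Perm.mul_apply, ih hk', ins_some_apply_sA, if_neg, ← Equiv.Perm.mul_apply,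
      ← pow_succ']
    intro he
    have hnp : ¬ Function.IsPeriodicPt ⇑τ (k + 1) t :=
      Function.not_isPeriodicPt_of_pos_of_lt_minimalPeriod (Nat.succ_ne_zero k) hk
    refine hnp ?_
    show (⇑τ)^[k + 1] t = t
    rw [Equiv.Perm.iterate_eq_pow, pow_succ', Equiv.Perm.mul_apply, he]

lemma ins_some_pow_j_top :
    ((ins j (some t) τ) ^ (Function.minimalPeriod ⇑τ t + 1)) j = j := by
  obtain ⟨m, hm⟩ := Nat.exists_eq_succ_of_ne_zero (Nat.pos_iff_ne_zero.mp (minPer_pos τ t))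
  rw [hm, pow_succ', Equiv.Perm.mul_apply,
    ins_some_pow_j j τ t (show m < Function.minimalPeriod ⇑τ t by omega),
    ins_some_apply_sA, if_pos]
  have := perm_pow_minPer τ t
  rw [hm, pow_succ', Equiv.Perm.mul_apply] at this
  exact this

lemma ins_some_minPer_j :
    Function.minimalPeriod ⇑(ins j (some t) τ) j = Function.minimalPeriod ⇑τ t + 1 := by
  have hdvd : Function.minimalPeriod ⇑(ins j (some t) τ) j ∣ Function.minimalPeriod ⇑τ t + 1 := by
    refine Function.IsPeriodicPt.minimalPeriod_dvd ?_
    show (⇑(ins j (some t) τ))^[Function.minimalPeriod ⇑τ t + 1] j = j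
    rw [Equiv.Perm.iterate_eq_pow]
    exact ins_some_pow_j_top j τ t
  have hpos : 0 < Function.minimalPeriod ⇑(ins j (some t) τ) j := minPer_pos _ _
  rcases lt_or_ge (Function.minimalPeriod ⇑(ins j (some t) τ) j)
      (Function.minimalPeriod ⇑τ t + 1) with hlt | hge
  · exfalso
    obtain ⟨k, hk⟩ := Nat.exists_eq_succ_of_ne_zero (Nat.pos_iff_ne_zero.mp hpos)
    have h1 : ((ins j (some t) τ) ^ (k + 1)) j = j.succAbove ((τ ^ k) t) :=
      ins_some_pow_j j τ t (by omega)
    have h2 : ((ins j (some t) τ) ^ (k + 1)) j = j := by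
      have h3 := Function.iterate_minimalPeriod (f := ⇑(ins j (some t) τ)) (x := j)
      rw [Equiv.Perm.iterate_eq_pow, hk] at h3
      exact h3
    rw [h2] at h1
    exact Fin.succAbove_ne j _ h1.symm
  · exact le_antisymm (Nat.le_of_dvd (Nat.succ_pos _) hdvd) hge

lemma pow_mod_period {m : ℕ} (σ : Equiv.Perm (Fin m)) (x : Fin m) {p : ℕ}
    (hp : (σ ^ p) x = x) (k : ℕ) : (σ ^ k) x = (σ ^ (k % p)) x := by
  suffices h : ∀ q, (σ ^ (p * q)) x = x by
    conv_lhs => rw [← Nat.mod_add_div k p]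
    rw [pow_add, Equiv.Perm.mul_apply, h]
  intro q
  induction q with
  | zero => simp
  | succ q ih => rw [Nat.mul_succ, pow_add, Equiv.Perm.mul_apply, hp, ih]

lemma ins_some_sameCycle_j (d : Fin (n + 2)) :
    (ins j (some t) τ).SameCycle j d ↔
      d = j ∨ ∃ x, τ.SameCycle t x ∧ d = j.succAbove x := by
  constructor
  · intro h
    obtain ⟨k, rfl⟩ := (sameCycle_iff_pow _ _ _).mp h
    rw [pow_mod_period _ j (ins_some_pow_j_top j τ t) k]
    have hrlt : k % (Function.minimalPeriod ⇑τ t + 1) < Function.minimalPeriod ⇑τ t + 1 :=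
      Nat.mod_lt _ (Nat.succ_pos _)
    rcases Nat.eq_zero_or_pos (k % (Function.minimalPeriod ⇑τ t + 1)) with h0 | hpos
    · left; rw [h0]; simp
    · right
      obtain ⟨k', hk'⟩ := Nat.exists_eq_succ_of_ne_zero (Nat.pos_iff_ne_zero.mp hpos)
      rw [hk']
      refine ⟨(τ ^ k') t, Equiv.Perm.sameCycle_pow_right.mpr (Equiv.Perm.SameCycle.refl _ _), ?_⟩
      exact ins_some_pow_j j τ t (k := k') (by omega)
  · rintro (rfl | ⟨x, hx, rfl⟩)
    · exact Equiv.Perm.SameCycle.refl _ _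
    · obtain ⟨k, rfl⟩ := (sameCycle_iff_pow τ t x).mp hx
      rw [pow_mod_period τ t (perm_pow_minPer τ t) k]
      refine (sameCycle_iff_pow _ _ _).mpr ⟨k % Function.minimalPeriod ⇑τ t + 1, ?_⟩
      exact ins_some_pow_j j τ t (Nat.mod_lt _ (minPer_pos τ t))

lemma ins_some_cycFinset_j :
    cycFinset (ins j (some t) τ) j = insert j ((cycFinset τ t).image j.succAbove) := by
  ext d
  simp only [mem_cycFinset, ins_some_sameCycle_j, Finset.mem_insert, Finset.mem_image]
  constructor
  · rintro (rfl | ⟨x, hx, rfl⟩)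
    · exact Or.inl rfl
    · exact Or.inr ⟨x, hx, rfl⟩
  · rintro (rfl | ⟨x, hx, rfl⟩)
    · exact Or.inl rfl
    · exact Or.inr ⟨x, hx, rfl⟩

end cases

section counts
variable (j : Fin (n + 2)) (τ : Equiv.Perm (Fin (n + 1)))

lemma univ_eq_insert : (Finset.univ : Finset (Fin (n + 2))) =
    insert j (Finset.univ.image j.succAbove) := by
  rw [Fin.image_succAbove_univ]
  ext x
  by_cases h : x = j <;> simp [h]

lemma image_cycFinset (σ : Equiv.Perm (Fin (n + 2))) :
    Finset.univ.image (cycFinset σ) =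
      insert (cycFinset σ j) (Finset.univ.image fun s => cycFinset σ (j.succAbove s)) := by
  conv_lhs => rw [univ_eq_insert j]
  rw [Finset.image_insert, Finset.image_image]
  rfl

lemma ins_none_cycCount : cycCount (ins j none τ) = cycCount τ + 1 := by
  rw [cycCount_eq_card_image, cycCount_eq_card_image, image_cycFinset j,
    ins_none_cycFinset_j]
  have h1 : (Finset.univ.image fun s => cycFinset (ins j none τ) (j.succAbove s)) =
      (Finset.univ.image (cycFinset τ)).image (fun S => S.image j.succAbove) := by
    rw [Finset.image_image]
    refine Finset.image_congr ?_
    intro s _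
    exact conj_cycFinset (ins_none_h j τ s)
  rw [h1, Finset.card_insert_of_notMem, Finset.card_image_of_injective _
    (Finset.image_injective Fin.succAbove_right_injective), add_comm]
  intro hmem
  obtain ⟨S, hS, hSe⟩ := Finset.mem_image.mp hmem
  obtain ⟨c, -, rfl⟩ := Finset.mem_image.mp hS
  have : j ∈ (cycFinset τ c).image j.succAbove := hSe.symm ▸ Finset.mem_singleton_self j
  obtain ⟨x, -, hx⟩ := Finset.mem_image.mp this
  exact Fin.succAbove_ne j x hx

variable (t : Fin (n + 1))

def Gmap (j : Fin (n + 2)) (t : Fin (n + 1)) (S : Finset (Fin (n + 1))) :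
    Finset (Fin (n + 2)) :=
  if t ∈ S then insert j (S.image j.succAbove) else S.image j.succAbove

lemma hjmem_aux (j : Fin (n + 2)) (T : Finset (Fin (n + 1))) :
    j ∉ T.image j.succAbove := by
  intro hT
  obtain ⟨x, -, hx⟩ := Finset.mem_image.mp hT
  exact Fin.succAbove_ne j x hx

lemma Gmap_injective (j : Fin (n + 2)) (t : Fin (n + 1)) :
    Function.Injective (Gmap j t) := by
  intro S S' hSS
  have key : ∀ (T T' : Finset (Fin (n + 1))),
      insert j (T.image j.succAbove) = insert j (T'.image j.succAbove) →
      T.image j.succAbove ⊆ T'.image j.succAbove := by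
    intro T T' hTT x hx
    have hx' : x ∈ insert j (T'.image j.succAbove) := by
      rw [← hTT]; exact Finset.mem_insert_of_mem hx
    rcases Finset.mem_insert.mp hx' with rfl | h
    · exact absurd hx (hjmem_aux _ T)
    · exact h
  have hiff : t ∈ S ↔ t ∈ S' := by
    constructor <;> intro hmem <;> by_contra hmem'
    · rw [Gmap, Gmap, if_pos hmem, if_neg hmem'] at hSS
      exact hjmem_aux j S' (by rw [← hSS]; exact Finset.mem_insert_self j _)
    · rw [Gmap, Gmap, if_neg hmem', if_pos hmem] at hSS
      exact hjmem_aux j S (by rw [hSS]; exact Finset.mem_insert_self j _)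
  have himg : S.image j.succAbove = S'.image j.succAbove := by
    by_cases hmem : t ∈ S
    · have hmem' := hiff.mp hmem
      rw [Gmap, Gmap, if_pos hmem, if_pos hmem'] at hSS
      exact le_antisymm (key _ _ hSS) (key _ _ hSS.symm)
    · have hmem' := (not_iff_not.mpr hiff).mp hmem
      rwa [Gmap, Gmap, if_neg hmem, if_neg hmem'] at hSS
  exact Finset.image_injective Fin.succAbove_right_injective himg

lemma ins_some_cycCount : cycCount (ins j (some t) τ) = cycCount τ := by
  have hGj : cycFinset (ins j (some t) τ) j = Gmap j t (cycFinset τ t) := by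
    rw [ins_some_cycFinset_j, Gmap,
      if_pos ((mem_cycFinset τ t t).mpr (Equiv.Perm.SameCycle.refl τ t))]
  have hGs : ∀ s, cycFinset (ins j (some t) τ) (j.succAbove s) = Gmap j t (cycFinset τ s) := by
    intro s
    by_cases hst : τ.SameCycle t s
    · have h1 : (ins j (some t) τ).SameCycle j (j.succAbove s) :=
        (ins_some_sameCycle_j j τ t _).mpr (Or.inr ⟨s, hst, rfl⟩)
      rw [← cycFinset_congr _ h1, hGj, cycFinset_congr τ hst]
    · rw [conj_cycFinset (ins_some_h j τ t hst), Gmap,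
        if_neg (fun hmem => hst ((mem_cycFinset τ s t).mp hmem).symm)]
  rw [cycCount_eq_card_image, cycCount_eq_card_image, image_cycFinset j, hGj]
  have h2 : (Finset.univ.image fun s => cycFinset (ins j (some t) τ) (j.succAbove s)) =
      (Finset.univ.image (cycFinset τ)).image (Gmap j t) := by
    rw [Finset.image_image]
    exact Finset.image_congr fun s _ => hGs s
  rw [h2, Finset.insert_eq_self.mpr, Finset.card_image_of_injective _ (Gmap_injective j t)]
  exact Finset.mem_image_of_mem (Gmap j t) (Finset.mem_image_of_mem _ (Finset.mem_univ t))

lemma ins_some_cycProdR (A : Matrix (Fin (n + 2)) (Fin (n + 2)) ℍ[ℝ]) :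
    cycProdR A (ins j (some t) τ) j =
      cycProdR ((A.updateRow (j.succAbove t) (A j)).submatrix j.succAbove j.succAbove) τ t *
        A (j.succAbove t) j := by
  unfold cycProdR
  rw [ins_some_minPer_j]
  rw [List.range_succ_eq_map, List.map_cons, List.map_map, List.reverse_cons,
    List.prod_append, List.prod_cons, List.prod_nil, mul_one]
  congr 1
  · congr 1
    congr 1
    refine List.map_congr_left ?_
    intro k hk
    have hkm : k < Function.minimalPeriod ⇑τ t := List.mem_range.mp hk
    simp only [Function.comp_apply, Matrix.submatrix_apply]
    have e1 : ((ins j (some t) τ) ^ (Nat.succ k)) j = j.succAbove ((τ ^ k) t) :=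
      ins_some_pow_j j τ t hkm
    rcases Nat.lt_or_ge (k + 1) (Function.minimalPeriod ⇑τ t) with hk1 | hk1
    · have e2 : ((ins j (some t) τ) ^ (Nat.succ k + 1)) j = j.succAbove ((τ ^ (k + 1)) t) :=
        ins_some_pow_j j τ t hk1
      rw [e1, e2, Matrix.updateRow_ne]
      intro he
      have := Fin.succAbove_right_injective (p := j) he
      exact Function.not_isPeriodicPt_of_pos_of_lt_minimalPeriod (Nat.succ_ne_zero k) hk1
        (by show (⇑τ)^[k + 1] t = t; rw [Equiv.Perm.iterate_eq_pow]; exact this)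
    · have hkeq : k + 1 = Function.minimalPeriod ⇑τ t := Nat.le_antisymm hkm hk1
      have e2 : ((ins j (some t) τ) ^ (Nat.succ k + 1)) j = j := by
        rw [show Nat.succ k + 1 = Function.minimalPeriod ⇑τ t + 1 by omega]
        exact ins_some_pow_j_top j τ t
      have e3 : (τ ^ (k + 1)) t = t := by rw [hkeq]; exact perm_pow_minPer τ t
      rw [e1, e2, e3, Matrix.updateRow_self]
  · rw [pow_one, pow_zero, Equiv.Perm.one_apply, ins_some_apply_j]

end counts

section terms
variable {n : ℕ}

lemma filter_min_cons {m : ℕ} (τ : Equiv.Perm (Fin (m + 1))) :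
    (List.finRange (m + 1)).filter (fun c => decide (∀ d, τ.SameCycle c d → c ≤ d)) =
      0 :: (List.finRange (m + 1)).filter
        (fun c => decide (¬τ.SameCycle 0 c ∧ ∀ d, τ.SameCycle c d → c ≤ d)) := by
  refine eq_of_sorted_mem ((List.pairwise_lt_finRange _).filter _) ?_ ?_
  · refine List.Pairwise.cons ?_ ((List.pairwise_lt_finRange _).filter _)
    intro x hx
    have hx2 := (List.mem_filter.mp hx).2
    simp only [decide_eq_true_eq] at hx2
    have hne : x ≠ 0 := fun h => hx2.1 (by rw [h])
    exact Fin.pos_of_ne_zero hne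
  · intro x
    simp only [List.mem_filter, List.mem_finRange, true_and, List.mem_cons,
      decide_eq_true_eq]
    constructor
    · intro hx
      by_cases h0 : τ.SameCycle 0 x
      · left
        exact _root_.le_antisymm (hx 0 h0.symm) (Fin.zero_le x)
      · right; exact ⟨h0, hx⟩
    · rintro (rfl | ⟨-, hx⟩)
      · intro d _; exact Fin.zero_le d
      · exact hx

lemma term_none (A : Matrix (Fin (n + 2)) (Fin (n + 2)) ℍ[ℝ]) (j : Fin (n + 2))
    (τ : Equiv.Perm (Fin (n + 1))) :
    (-1 : ℍ[ℝ]) ^ (n + 2 - cycCount (ins j none τ)) *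
      ((((List.finRange (n + 2)).filter fun c => decide (¬(ins j none τ).SameCycle j c ∧
          ∀ d, (ins j none τ).SameCycle c d → c ≤ d)).map
            (cycProdR A (ins j none τ))).reverse.prod *
        cycProdR A (ins j none τ) j) =
    ((-1 : ℍ[ℝ]) ^ (n + 1 - cycCount τ) *
      ((((List.finRange (n + 1)).filter fun c => decide (¬τ.SameCycle 0 c ∧
          ∀ d, τ.SameCycle c d → c ≤ d)).map
            (cycProdR (A.submatrix j.succAbove j.succAbove) τ)).reverse.prod *
        cycProdR (A.submatrix j.succAbove j.succAbove) τ 0)) * A j j := by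
  have hlist : ((List.finRange (n + 2)).filter fun c => decide (¬(ins j none τ).SameCycle j c ∧
      ∀ d, (ins j none τ).SameCycle c d → c ≤ d)) =
      ((List.finRange (n + 1)).filter fun c =>
        decide (∀ d, τ.SameCycle c d → c ≤ d)).map j.succAbove := by
    rw [filter_finRange_map j
      (fun c => ¬(ins j none τ).SameCycle j c ∧ ∀ d, (ins j none τ).SameCycle c d → c ≤ d)
      (fun h => h.1 (Equiv.Perm.SameCycle.refl _ _))]
    congr 1
    refine List.filter_congr fun s _ => ?_
    rw [decide_eq_decide]
    constructor
    · intro h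
      exact (conj_minimal (ins_none_h j τ s)).mp h.2
    · intro h
      refine ⟨?_, (conj_minimal (ins_none_h j τ s)).mpr h⟩
      intro hc
      exact Fin.succAbove_ne j s ((ins_none_sameCycle_j j τ _).mp hc)
  have hmap : ∀ l : List (Fin (n + 1)),
      (l.map j.succAbove).map (cycProdR A (ins j none τ)) =
        l.map (cycProdR (A.submatrix j.succAbove j.succAbove) τ) := by
    intro l
    rw [List.map_map]
    refine List.map_congr_left fun s _ => ?_
    exact conj_cycProdR (ins_none_h j τ s) (fun x y _ => rfl)
  rw [hlist, hmap, filter_min_cons τ, List.map_cons, ins_none_cycProdR,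
    ins_none_cycCount, List.reverse_cons, List.prod_append, List.prod_cons, List.prod_nil,
    mul_one]
  rw [show n + 2 - (cycCount τ + 1) = n + 1 - cycCount τ from by omega]
  exact (mul_assoc _ _ _).symm


lemma term_some (A : Matrix (Fin (n + 2)) (Fin (n + 2)) ℍ[ℝ]) (j : Fin (n + 2))
    (t : Fin (n + 1)) (τ : Equiv.Perm (Fin (n + 1))) :
    (-1 : ℍ[ℝ]) ^ (n + 2 - cycCount (ins j (some t) τ)) *
      ((((List.finRange (n + 2)).filter fun c => decide (¬(ins j (some t) τ).SameCycle j c ∧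
          ∀ d, (ins j (some t) τ).SameCycle c d → c ≤ d)).map
            (cycProdR A (ins j (some t) τ))).reverse.prod *
        cycProdR A (ins j (some t) τ) j) =
    (-((-1 : ℍ[ℝ]) ^ (n + 1 - cycCount τ) *
      ((((List.finRange (n + 1)).filter fun c => decide (¬τ.SameCycle t c ∧
          ∀ d, τ.SameCycle c d → c ≤ d)).map
            (cycProdR ((A.updateRow (j.succAbove t) fun s => A j s).submatrix
              j.succAbove j.succAbove) τ)).reverse.prod *
        cycProdR ((A.updateRow (j.succAbove t) fun s => A j s).submatrix
          j.succAbove j.succAbove) τ t))) * A (j.succAbove t) j := by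
  have hlist : ((List.finRange (n + 2)).filter fun c => decide (¬(ins j (some t) τ).SameCycle j c ∧
      ∀ d, (ins j (some t) τ).SameCycle c d → c ≤ d)) =
      ((List.finRange (n + 1)).filter fun c =>
        decide (¬τ.SameCycle t c ∧ ∀ d, τ.SameCycle c d → c ≤ d)).map j.succAbove := by
    rw [filter_finRange_map j
      (fun c => ¬(ins j (some t) τ).SameCycle j c ∧ ∀ d, (ins j (some t) τ).SameCycle c d → c ≤ d)
      (fun h => h.1 (Equiv.Perm.SameCycle.refl _ _))]
    congr 1
    refine List.filter_congr fun s _ => ?_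
    rw [decide_eq_decide]
    constructor
    · rintro ⟨h1, h2⟩
      have hst : ¬τ.SameCycle t s := fun hc =>
        h1 ((ins_some_sameCycle_j j τ t _).mpr (Or.inr ⟨s, hc, rfl⟩))
      exact ⟨hst, (conj_minimal (ins_some_h j τ t hst)).mp h2⟩
    · rintro ⟨hst, h2⟩
      refine ⟨?_, (conj_minimal (ins_some_h j τ t hst)).mpr h2⟩
      intro hc
      rcases (ins_some_sameCycle_j j τ t _).mp hc with he | ⟨x, hx, he⟩
      · exact Fin.succAbove_ne j s he
      · exact hst (Fin.succAbove_right_injective he ▸ hx)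
  have hmap : (((List.finRange (n + 1)).filter fun c =>
      decide (¬τ.SameCycle t c ∧ ∀ d, τ.SameCycle c d → c ≤ d)).map j.succAbove).map
        (cycProdR A (ins j (some t) τ)) =
      ((List.finRange (n + 1)).filter fun c =>
        decide (¬τ.SameCycle t c ∧ ∀ d, τ.SameCycle c d → c ≤ d)).map
          (cycProdR ((A.updateRow (j.succAbove t) fun s => A j s).submatrix
            j.succAbove j.succAbove) τ) := by
    rw [List.map_map]
    refine List.map_congr_left fun s hs => ?_
    have hst : ¬τ.SameCycle t s := by
      have h2 := (List.mem_filter.mp hs).2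
      simp only [decide_eq_true_eq] at h2
      exact h2.1
    refine conj_cycProdR (ins_some_h j τ t hst) ?_
    intro x y hx
    have hxt : x ≠ t := fun h => hst (h ▸ hx.symm)
    have : j.succAbove x ≠ j.succAbove t := fun he => hxt (Fin.succAbove_right_injective he)
    simp [Matrix.submatrix_apply, Matrix.updateRow_ne this]
  rw [hlist, hmap, ins_some_cycProdR, ins_some_cycCount]
  have hc : cycCount τ ≤ n + 1 := cycCount_le τ
  rw [show n + 2 - cycCount τ = (n + 1 - cycCount τ) + 1 from by omega]
  simp only [pow_succ, mul_neg_one, neg_mul, ← mul_assoc]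

end terms

section main
variable {n : ℕ}

lemma sum_none (A : Matrix (Fin (n + 2)) (Fin (n + 2)) ℍ[ℝ]) (j : Fin (n + 2)) :
    (∑ τ : Equiv.Perm (Fin (n + 1)),
      (-1 : ℍ[ℝ]) ^ (n + 2 - cycCount (ins j none τ)) *
        ((((List.finRange (n + 2)).filter fun c => decide (¬(ins j none τ).SameCycle j c ∧
            ∀ d, (ins j none τ).SameCycle c d → c ≤ d)).map
              (cycProdR A (ins j none τ))).reverse.prod *
          cycProdR A (ins j none τ) j)) =
      Lcof A j j * A j j := by
  rw [Lcof, if_pos rfl, cdet, Finset.sum_mul]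
  exact Finset.sum_congr rfl fun τ _ => term_none A j τ

lemma sum_some (A : Matrix (Fin (n + 2)) (Fin (n + 2)) ℍ[ℝ]) (j : Fin (n + 2)) (t : Fin (n + 1)) :
    (∑ τ : Equiv.Perm (Fin (n + 1)),
      (-1 : ℍ[ℝ]) ^ (n + 2 - cycCount (ins j (some t) τ)) *
        ((((List.finRange (n + 2)).filter fun c => decide (¬(ins j (some t) τ).SameCycle j c ∧
            ∀ d, (ins j (some t) τ).SameCycle c d → c ≤ d)).map
              (cycProdR A (ins j (some t) τ))).reverse.prod *
          cycProdR A (ins j (some t) τ) j)) =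
      Lcof A (j.succAbove t) j * A (j.succAbove t) j := by
  have hfilter : (Finset.univ.filter fun t' : Fin (n + 1) => j.succAbove t' = j.succAbove t)
      = {t} := by
    ext x
    simp [Fin.succAbove_right_injective.eq_iff]
  rw [Lcof, if_neg (Fin.succAbove_ne j t), hfilter, Finset.sum_singleton, cdet,
    ← Finset.sum_neg_distrib, Finset.sum_mul]
  exact Finset.sum_congr rfl fun τ _ => term_some A j t τ

theorem cdet_cofactor_expansion_aux (A : Matrix (Fin (n + 2)) (Fin (n + 2)) ℍ[ℝ])
    (j : Fin (n + 2)) :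
    cdet A j = ∑ i, Lcof A i j * A i j := by
  rw [cdet]
  rw [← Equiv.sum_comp ((finSuccEquiv' j).permCongr.trans Equiv.Perm.decomposeOption).symm]
  have hins : ∀ p : Option (Fin (n + 1)) × Equiv.Perm (Fin (n + 1)),
      ((finSuccEquiv' j).permCongr.trans Equiv.Perm.decomposeOption).symm p = ins j p.1 p.2 :=
    fun p => (ins_eq_decompose j p).symm
  rw [Fintype.sum_prod_type]
  rw [Fintype.sum_option]
  rw [Fin.sum_univ_succAbove (fun i => Lcof A i j * A i j) j]
  congr 1
  · rw [← sum_none A j]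
    refine Finset.sum_congr rfl fun τ _ => ?_
    rw [hins (none, τ)]
  · rw [← Finset.sum_congr rfl fun t (_ : t ∈ Finset.univ) => (sum_some A j t)]
    refine Finset.sum_congr rfl fun t _ => Finset.sum_congr rfl fun τ _ => ?_
    rw [hins (some t, τ)]

end main





end CofactorAux

/-- Expansion of the `j`-th column determinant by left cofactors along the `j`-th column:
`cdet_j A = Σ_{i=1}^n L_{ij} · a_{ij}`. -/
theorem cdet_cofactor_expansion {n : ℕ} (A : Matrix (Fin (n + 2)) (Fin (n + 2)) ℍ[ℝ])
    (j : Fin (n + 2)) :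
    cdet A j = ∑ i, Lcof A i j * A i j :=
  CofactorAux.cdet_cofactor_expansion_aux A j
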